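/- Let V be a real inner product space of dimension 2m ≥ 6 with orthogonal almost complex structure J, and suppose a quadrilinear curvature-like tensor R satisfies R(x,y,z,u) = R(Jx,Jy,Jz,Ju) and has the form R = ν·π₁ + ((μ-ν)/3)·π₂ for some μ,ν ∈ ℝ with μ ≠ ν. Then for any θ-holomorphic plane with θ ∈ (0,π/2), the sectional curvature determines θ; in particular, two 2-planes with distinct holomorphy angles in (0,π/2) have distinct sectional curvatures. -/
import Mathlib


open RealInnerProductSpace

noncomputable def pi1 {V : Type*} [NormedAddCommGroup V] [InnerProductSpace ℝ V] :
    V → V → V → V → ℝ :=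
  fun x y z u => ⟪x, u⟫ * ⟪y, z⟫ - ⟪x, z⟫ * ⟪y, u⟫

noncomputable def pi2 {V : Type*} [NormedAddCommGroup V] [InnerProductSpace ℝ V]
    (J : V →ₗ[ℝ] V) : V → V → V → V → ℝ :=
  fun x y z u => ⟪x, J u⟫ * ⟪y, J z⟫ - ⟪x, J z⟫ * ⟪y, J u⟫ - 2 * ⟪x, J y⟫ * ⟪z, J u⟫

lemma skewJ {V : Type*} [NormedAddCommGroup V] [InnerProductSpace ℝ V]
    (J : V →ₗ[ℝ] V) (hJ2 : ∀ x, J (J x) = -x) (hJg : ∀ x y, ⟪J x, J y⟫ = ⟪x, y⟫)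
    (x y : V) : ⟪y, J x⟫ = -⟪x, J y⟫ := by
  have h := hJg y (J x)
  rw [hJ2, inner_neg_right] at h
  rw [← h, real_inner_comm]

lemma curv_formula {V : Type*} [NormedAddCommGroup V] [InnerProductSpace ℝ V]
    (J : V →ₗ[ℝ] V) (hJ2 : ∀ x, J (J x) = -x) (hJg : ∀ x y, ⟪J x, J y⟫ = ⟪x, y⟫)
    (μ ν : ℝ) (R : V → V → V → V → ℝ)
    (hR : ∀ x y z u, R x y z u = ν * pi1 x y z u + (μ - ν) / 3 * pi2 J x y z u)
    (x y : V) (hx : ‖x‖ = 1) (hy : ‖y‖ = 1) (hxy : ⟪x, y⟫ = 0) :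
    R x y y x = ν + (μ - ν) * ⟪x, J y⟫ ^ 2 := by
  have hxx : ⟪x, x⟫ = (1 : ℝ) := by
    rw [real_inner_self_eq_norm_sq, hx]; norm_num
  have hyy : ⟪y, y⟫ = (1 : ℝ) := by
    rw [real_inner_self_eq_norm_sq, hy]; norm_num
  have hyx : ⟪y, x⟫ = 0 := by rw [real_inner_comm, hxy]
  have hxJx : ⟪x, J x⟫ = 0 := by
    have := skewJ J hJ2 hJg x x; linarith
  have hyJy : ⟪y, J y⟫ = 0 := by
    have := skewJ J hJ2 hJg y y; linarith
  have hyJx : ⟪y, J x⟫ = -⟪x, J y⟫ := skewJ J hJ2 hJg x y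
  rw [hR, pi1, pi2]
  simp only [hxx, hyy, hxy, hyx, hxJx, hyJy, hyJx]
  ring

theorem sectional_curvature_determines_angle
    {V : Type*} [NormedAddCommGroup V] [InnerProductSpace ℝ V] [FiniteDimensional ℝ V]
    (m : ℕ) (hdim : Module.finrank ℝ V = 2 * m) (hm : 6 ≤ 2 * m)
    (J : V →ₗ[ℝ] V) (hJ2 : ∀ x, J (J x) = -x) (hJg : ∀ x y, ⟪J x, J y⟫ = ⟪x, y⟫)
    (μ ν : ℝ) (hμν : μ ≠ ν) (R : V → V → V → V → ℝ)
    (hK : ∀ x y z u, R x y z u = R (J x) (J y) (J z) (J u))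
    (hR : ∀ x y z u, R x y z u = ν * pi1 x y z u + (μ - ν) / 3 * pi2 J x y z u)
    (θ₁ θ₂ : ℝ) (hθ₁ : θ₁ ∈ Set.Ioo 0 (Real.pi / 2)) (hθ₂ : θ₂ ∈ Set.Ioo 0 (Real.pi / 2))
    (hθ : θ₁ ≠ θ₂)
    (x₁ y₁ x₂ y₂ : V)
    (hx₁ : ‖x₁‖ = 1) (hy₁ : ‖y₁‖ = 1) (hxy₁ : ⟪x₁, y₁⟫ = 0)
    (hang₁ : |⟪x₁, J y₁⟫| = Real.cos θ₁)
    (hx₂ : ‖x₂‖ = 1) (hy₂ : ‖y₂‖ = 1) (hxy₂ : ⟪x₂, y₂⟫ = 0)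
    (hang₂ : |⟪x₂, J y₂⟫| = Real.cos θ₂) :
    R x₁ y₁ y₁ x₁ ≠ R x₂ y₂ y₂ x₂ := by
  have h1 := curv_formula J hJ2 hJg μ ν R hR x₁ y₁ hx₁ hy₁ hxy₁
  have h2 := curv_formula J hJ2 hJg μ ν R hR x₂ y₂ hx₂ hy₂ hxy₂
  have e1 : ⟪x₁, J y₁⟫ ^ 2 = Real.cos θ₁ ^ 2 := by
    rw [← hang₁, sq_abs]
  have e2 : ⟪x₂, J y₂⟫ ^ 2 = Real.cos θ₂ ^ 2 := by
    rw [← hang₂, sq_abs]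
  rw [h1, h2, e1, e2]
  intro h
  have hc : Real.cos θ₁ ^ 2 = Real.cos θ₂ ^ 2 := by
    have hne : μ - ν ≠ 0 := sub_ne_zero.mpr hμν
    have h' : (μ - ν) * Real.cos θ₁ ^ 2 = (μ - ν) * Real.cos θ₂ ^ 2 := by linarith
    exact mul_left_cancel₀ hne h'
  have hcos : Real.cos θ₁ = Real.cos θ₂ := by
    have p1 : 0 ≤ Real.cos θ₁ := Real.cos_nonneg_of_mem_Icc
      ⟨by linarith [hθ₁.1, Real.pi_pos], le_of_lt hθ₁.2⟩
    have p2 : 0 ≤ Real.cos θ₂ := Real.cos_nonneg_of_mem_Icc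
      ⟨by linarith [hθ₂.1, Real.pi_pos], le_of_lt hθ₂.2⟩
    nlinarith
  exact hθ (Real.injOn_cos ⟨le_of_lt hθ₁.1, by linarith [hθ₁.2.le, Real.pi_pos]⟩
    ⟨le_of_lt hθ₂.1, by linarith [hθ₂.2.le, Real.pi_pos]⟩ hcos)
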